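/- Let p ∈ (1,2] and λ ≥ 0, and let V : ℝ^d → ℝ be a function such that x ↦ V(x) + λ‖x‖_p^p is convex. Then at every point x where V is differentiable and for every u ∈ ℝ^d, V(x+u) ≥ V(x) + ⟨u, ∇V(x)⟩ − λ 2^{2−p} ‖u‖_p^p; equivalently, the convexity defect satisfies 𝒟_V(x, y) ≤ λ 2^{2−p} ‖y−x‖_p^p. -/

import Mathlib

open Real Set


lemma aux_rpow_add_le {s x y : ℝ} (hs0 : 0 ≤ s) (hs1 : s ≤ 1) (hx : 0 ≤ x) (hy : 0 ≤ y) :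
    (x + y) ^ s ≤ x ^ s + y ^ s := by
  have := NNReal.rpow_add_le_add_rpow ⟨x, hx⟩ ⟨y, hy⟩ hs0 hs1
  exact_mod_cast this

lemma aux_concave {s x y : ℝ} (hs0 : 0 ≤ s) (hs1 : s ≤ 1) (hx : 0 ≤ x) (hy : 0 ≤ y) :
    x ^ s + y ^ s ≤ 2 ^ (1 - s) * (x + y) ^ s := by
  have h := (Real.concaveOn_rpow hs0 hs1).2 (mem_Ici.2 hx) (mem_Ici.2 hy)
      (by norm_num : (0:ℝ) ≤ 1/2) (by norm_num : (0:ℝ) ≤ 1/2) (by norm_num)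
  simp only [smul_eq_mul] at h
  have h2 : ((1:ℝ)/2 * x + 1/2 * y) ^ s = (x + y) ^ s / 2 ^ s := by
    rw [show (1:ℝ)/2 * x + 1/2 * y = (x + y) / 2 by ring, Real.div_rpow (by linarith) (by norm_num)]
  rw [h2] at h
  have h3 : (2:ℝ) ^ (1 - s) = 2 / 2 ^ s := by
    rw [Real.rpow_sub (by norm_num), Real.rpow_one]
  rw [h3]
  have hpos : (0:ℝ) < 2 ^ s := Real.rpow_pos_of_pos (by norm_num) s
  rw [div_mul_eq_mul_div, le_div_iff₀ hpos]
  nlinarith [mul_le_mul_of_nonneg_right h hpos.le, div_mul_cancel₀ ((x+y)^s) hpos.ne']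

lemma psi_eq {s : ℝ} (hs0 : 0 < s) {x : ℝ} (hx : 0 ≤ x) : |x| ^ (s - 1) * x = x ^ s := by
  rcases eq_or_lt_of_le hx with h | h
  · rw [← h]; simp [Real.zero_rpow hs0.ne']
  · rw [abs_of_pos h, ← Real.rpow_add_one h.ne']
    ring_nf

lemma psi_sub_le {s : ℝ} (hs0 : 0 < s) (hs1 : s ≤ 1) (x y : ℝ) :
    |x| ^ (s - 1) * x - |y| ^ (s - 1) * y ≤ 2 ^ (1 - s) * |x - y| ^ s := by
  have h2 : (1:ℝ) ≤ 2 ^ (1 - s) := by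
    have := Real.rpow_le_rpow_of_exponent_le (by norm_num : (1:ℝ) ≤ 2) (by linarith : 0 ≤ 1 - s)
    simpa using this
  have hRHS : 0 ≤ 2 ^ (1 - s) * |x - y| ^ s := by positivity
  rcases le_or_gt 0 x with hx | hx <;> rcases le_or_gt 0 y with hy | hy
  · -- both nonneg
    rw [psi_eq hs0 hx, psi_eq hs0 hy]
    rcases le_or_gt x y with hxy | hxy
    · have : x ^ s ≤ y ^ s := Real.rpow_le_rpow hx hxy hs0.le
      linarith
    · have h1 : x ^ s ≤ (x - y) ^ s + y ^ s := by
        have := aux_rpow_add_le hs0.le hs1 (by linarith : (0:ℝ) ≤ x - y) hy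
        rw [sub_add_cancel] at this
        exact this
      have habs : |x - y| = x - y := abs_of_pos (by linarith)
      have h4 : (x - y) ^ s ≤ 2 ^ (1 - s) * (x - y) ^ s := by
        nlinarith [Real.rpow_nonneg (by linarith : (0:ℝ) ≤ x - y) s]
      rw [habs]; linarith
  · -- x ≥ 0 > y
    rw [psi_eq hs0 hx]
    have hy' : (0:ℝ) ≤ -y := by linarith
    have : |y| ^ (s - 1) * y = -((-y) ^ s) := by
      rw [abs_of_neg hy, ← psi_eq hs0 hy', abs_of_nonneg hy']; ring
    rw [this]
    have habs : |x - y| = x + -y := by rw [abs_of_pos (by linarith)]; ring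
    rw [habs]
    have := aux_concave hs0.le hs1 hx hy'
    linarith
  · -- x < 0 ≤ y
    have hx' : |x| ^ (s - 1) * x ≤ 0 := by
      apply mul_nonpos_of_nonneg_of_nonpos (Real.rpow_nonneg (abs_nonneg x) _) hx.le
    have hy' : 0 ≤ |y| ^ (s - 1) * y :=
      mul_nonneg (Real.rpow_nonneg (abs_nonneg y) _) hy
    linarith
  · -- both neg
    have hx' : (0:ℝ) ≤ -x := by linarith
    have hy' : (0:ℝ) ≤ -y := by linarith
    have ex : |x| ^ (s - 1) * x = -((-x) ^ s) := by
      rw [abs_of_neg hx, ← psi_eq hs0 hx', abs_of_nonneg hx']; ring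
    have ey : |y| ^ (s - 1) * y = -((-y) ^ s) := by
      rw [abs_of_neg hy, ← psi_eq hs0 hy', abs_of_nonneg hy']; ring
    rw [ex, ey]
    rcases le_or_gt (-y) (-x) with hxy | hxy
    · have : (-y) ^ s ≤ (-x) ^ s := Real.rpow_le_rpow hy' hxy hs0.le
      linarith
    · have h1 : (-y) ^ s ≤ (-y - -x) ^ s + (-x) ^ s := by
        have := aux_rpow_add_le hs0.le hs1 (by linarith : (0:ℝ) ≤ -y - -x) hx'
        rw [sub_add_cancel] at this
        exact this
      have habs : |x - y| = -y - -x := by rw [abs_of_pos (by linarith)]; ring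
      have h4 : (-y - -x) ^ s ≤ 2 ^ (1 - s) * (-y - -x) ^ s := by
        nlinarith [Real.rpow_nonneg (by linarith : (0:ℝ) ≤ -y - -x) s]
      rw [habs]; linarith

lemma psi_abs_sub_le {s : ℝ} (hs0 : 0 < s) (hs1 : s ≤ 1) (x y : ℝ) :
    |(|x| ^ (s - 1) * x) - (|y| ^ (s - 1) * y)| ≤ 2 ^ (1 - s) * |x - y| ^ s := by
  rw [abs_sub_le_iff]
  refine ⟨psi_sub_le hs0 hs1 x y, ?_⟩
  have := psi_sub_le hs0 hs1 y x
  rwa [abs_sub_comm] at this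

lemma scalar_defect {p : ℝ} (hp1 : 1 < p) (hp2 : p ≤ 2) (a b : ℝ) :
    |a + b| ^ p ≤ |a| ^ p + p * |a| ^ (p - 2) * a * b + 2 ^ (2 - p) * |b| ^ p := by
  rcases eq_or_ne b 0 with rfl | hb
  · simp [Real.zero_rpow (by positivity : p ≠ 0)]
  have hb' : 0 < |b| := abs_pos.2 hb
  set c1 : ℝ := p * |a| ^ (p - 2) * a * b with hc1
  set c2 : ℝ := 2 ^ (2 - p) * |b| ^ p with hc2
  set h : ℝ → ℝ := fun t => |a + t * b| ^ p - c1 * t - c2 * t ^ p with hh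
  have hD : ∀ t ∈ interior (Icc (0:ℝ) 1),
      HasDerivAt h (p * |a + t * b| ^ (p - 2) * (a + t * b) * b - c1 - c2 * (p * t ^ (p - 1))) t := by
    intro t ht
    have hinner : HasDerivAt (fun t : ℝ => a + t * b) b t := by
      simpa using ((hasDerivAt_id t).mul_const b).const_add a
    have h1 : HasDerivAt (fun t : ℝ => |a + t * b| ^ p)
        (p * |a + t * b| ^ (p - 2) * (a + t * b) * b) t := by
      have := (hasDerivAt_abs_rpow (a + t * b) hp1).comp t hinner
      exact this
    have h2 : HasDerivAt (fun t : ℝ => t ^ p) (p * t ^ (p - 1)) t :=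
      Real.hasDerivAt_rpow_const (Or.inr hp1.le)
    have := (h1.sub ((hasDerivAt_id t).const_mul c1)).sub (h2.const_mul c2)
    refine this.congr_deriv ?_
    ring
  have hcont : ContinuousOn h (Icc 0 1) := by
    apply ContinuousOn.sub
    apply ContinuousOn.sub
    · exact ((continuous_abs.comp (continuous_const.add
        (continuous_id.mul continuous_const))).rpow_const
        (fun t => Or.inr (by positivity))).continuousOn
    · exact (continuous_const.mul continuous_id).continuousOn
    · exact (continuous_const.mul (continuous_id.rpow_const
        (fun t => Or.inr (by positivity)))).continuousOn
  have hdiff : DifferentiableOn ℝ h (interior (Icc (0:ℝ) 1)) :=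
    fun t ht => ((hD t ht).differentiableAt).differentiableWithinAt
  have hderiv : ∀ t ∈ interior (Icc (0:ℝ) 1), deriv h t ≤ 0 := by
    intro t ht
    rw [(hD t ht).deriv]
    rw [interior_Icc] at ht
    have ht0 : 0 < t := ht.1
    have hpsi : |(|a + t*b| ^ (p-2) * (a + t*b)) - |a| ^ (p-2) * a| ≤ 2 ^ (2-p) * |t*b| ^ (p-1) := by
      have := psi_abs_sub_le (s := p-1) (by linarith) (by linarith) (a + t*b) a
      simpa [show p - 1 - 1 = p - 2 by ring, show 1 - (p-1) = 2 - p by ring,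
        show a + t*b - a = t*b by ring] using this
    have e3 : |t*b| ^ (p-1) = t ^ (p-1) * |b| ^ (p-1) := by
      rw [abs_mul, abs_of_pos ht0, Real.mul_rpow ht0.le (abs_nonneg b)]
    have e4 : |b| ^ (p-1) * |b| = |b| ^ p := by
      nth_rewrite 2 [← Real.rpow_one |b|]
      rw [← Real.rpow_add hb', sub_add_cancel]
    have e1 : ((|a + t*b| ^ (p-2) * (a + t*b)) - |a| ^ (p-2) * a) * b
        ≤ 2 ^ (2-p) * |b| ^ p * t ^ (p-1) := by
      calc ((|a + t*b| ^ (p-2) * (a + t*b)) - |a| ^ (p-2) * a) * b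
          ≤ |((|a + t*b| ^ (p-2) * (a + t*b)) - |a| ^ (p-2) * a) * b| := le_abs_self _
        _ = |(|a + t*b| ^ (p-2) * (a + t*b)) - |a| ^ (p-2) * a| * |b| := abs_mul _ _
        _ ≤ (2 ^ (2-p) * |t*b| ^ (p-1)) * |b| := mul_le_mul_of_nonneg_right hpsi (abs_nonneg b)
        _ = 2 ^ (2-p) * |b| ^ p * t ^ (p-1) := by rw [e3, ← e4]; ring
    have hppos : (0:ℝ) < p := by linarith
    have : p * |a + t * b| ^ (p - 2) * (a + t * b) * b - c1 - c2 * (p * t ^ (p - 1))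
        = p * (((|a + t*b| ^ (p-2) * (a + t*b)) - |a| ^ (p-2) * a) * b
            - 2 ^ (2-p) * |b| ^ p * t ^ (p-1)) := by rw [hc1, hc2]; ring
    rw [this]
    have := sub_nonpos.2 e1
    exact mul_nonpos_of_nonneg_of_nonpos hppos.le this
  have hanti := antitoneOn_of_deriv_nonpos (convex_Icc 0 1) hcont hdiff hderiv
  have hkey : h 1 ≤ h 0 := hanti (left_mem_Icc.2 zero_le_one) (right_mem_Icc.2 zero_le_one)
    zero_le_one
  have h0 : h 0 = |a| ^ p := by
    simp [hh, Real.zero_rpow (by positivity : p ≠ 0)]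
  have h1 : h 1 = |a + b| ^ p - c1 - c2 := by
    simp [hh, Real.one_rpow]
  rw [h0, h1] at hkey
  linarith



/-- if `V + λ‖·‖_p^p` is convex, `1 < p ≤ 2`, then the convexity defect of `V`
is controlled: `V(x+u) ≥ V(x) + ⟨u, ∇V(x)⟩ − λ 2^{2−p} ‖u‖_p^p` at points of
differentiability. -/
theorem stmt11 {d : ℕ} (p lam : ℝ) (hp : p ∈ Set.Ioc (1 : ℝ) 2) (hlam : 0 ≤ lam)
    (V : EuclideanSpace ℝ (Fin d) → ℝ)
    (hconv : ConvexOn ℝ Set.univ (fun x => V x + lam * ∑ i, |x i| ^ p)) :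
    ∀ x : EuclideanSpace ℝ (Fin d), DifferentiableAt ℝ V x →
      ∀ u : EuclideanSpace ℝ (Fin d),
        V x + fderiv ℝ V x u - lam * 2 ^ (2 - p) * ∑ i, |u i| ^ p ≤ V (x + u) := by
  obtain ⟨hp1, hp2⟩ := hp
  intro x hVx u
  have haux : ∀ (t : ℝ) (i : Fin d), (x + t • u) i = x i + t * u i := by
    intro t i
    simp [PiLp.add_apply, PiLp.smul_apply, smul_eq_mul]
  set g : ℝ → ℝ := fun t => V (x + t • u) + lam * ∑ i, |x i + t * u i| ^ p with hg
  have hgF : ∀ t : ℝ, g t = V (x + t • u) + lam * ∑ i, |(x + t • u) i| ^ p := by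
    intro t; simp only [hg, haux]
  have hconvline : ConvexOn ℝ Set.univ g := by
    refine ⟨convex_univ, ?_⟩
    intro s _ t _ α β hα hβ hαβ
    have hmix : x + (α • s + β • t) • u = α • (x + s • u) + β • (x + t • u) := by
      rw [smul_add, smul_add, smul_smul, smul_smul, add_add_add_comm, ← add_smul, hαβ, one_smul,
        ← add_smul]
      simp [smul_eq_mul]
    have h2 := hconv.2 (Set.mem_univ (x + s • u)) (Set.mem_univ (x + t • u)) hα hβ hαβ
    simp only [smul_eq_mul] at h2 hmix ⊢
    rw [hgF, hgF, hgF, hmix]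
    exact h2
  have hline : HasDerivAt (fun t : ℝ => x + t • u) u 0 := by
    simpa using ((hasDerivAt_id (0:ℝ)).smul_const u).const_add x
  have hVd : HasDerivAt (fun t : ℝ => V (x + t • u)) (fderiv ℝ V x u) 0 := by
    have h0 : HasFDerivAt V (fderiv ℝ V x) ((fun t : ℝ => x + t • u) 0) := by
      simpa using hVx.hasFDerivAt
    exact h0.comp_hasDerivAt 0 hline
  have hsum : ∀ i : Fin d, HasDerivAt (fun t : ℝ => |x i + t * u i| ^ p)
      (p * |x i| ^ (p - 2) * x i * u i) 0 := by
    intro i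
    have hinner : HasDerivAt (fun t : ℝ => x i + t * u i) (u i) 0 := by
      simpa using ((hasDerivAt_id (0:ℝ)).mul_const (u i)).const_add (x i)
    have h2 : HasDerivAt (fun y : ℝ => |y| ^ p) (p * |x i| ^ (p - 2) * x i)
        ((fun t : ℝ => x i + t * u i) 0) := by
      simpa using hasDerivAt_abs_rpow (x i) hp1
    have := h2.comp 0 hinner
    exact this
  have hgd : HasDerivAt g
      (fderiv ℝ V x u + lam * ∑ i, p * |x i| ^ (p - 2) * x i * u i) 0 :=
    hVd.add ((HasDerivAt.fun_sum (fun i _ => hsum i)).const_mul lam)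
  have hslope := hconvline.le_slope_of_hasDerivAt (Set.mem_univ (0:ℝ)) (Set.mem_univ (1:ℝ))
    one_pos hgd
  rw [slope_def_field] at hslope
  have hg1 : g 1 = V (x + u) + lam * ∑ i, |x i + u i| ^ p := by
    simp [hg]
  have hg0 : g 0 = V x + lam * ∑ i, |x i| ^ p := by
    simp [hg]
  rw [hg1, hg0] at hslope
  norm_num at hslope
  have hds : ∑ i, |x i + u i| ^ p ≤
      (∑ i, |x i| ^ p) + (∑ i, p * |x i| ^ (p - 2) * x i * u i) + 2 ^ (2 - p) * ∑ i, |u i| ^ p := by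
    have h1 : ∑ i, |x i + u i| ^ p ≤
        ∑ i, (|x i| ^ p + p * |x i| ^ (p - 2) * x i * u i + 2 ^ (2 - p) * |u i| ^ p) :=
      Finset.sum_le_sum fun i _ => scalar_defect hp1 hp2 (x i) (u i)
    simpa [Finset.sum_add_distrib, Finset.mul_sum] using h1
  have hmul := mul_le_mul_of_nonneg_left hds hlam
  rw [mul_add, mul_add, ← mul_assoc] at hmul
  linarith
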